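/- For all positive integers n and k, Φ_k(n) = ∑_{d|n} μ(d)·C(n/d, k), where the sum is over all positive divisors d of n, μ is the Möbius function, and C denotes the binomial coefficient. -/
import Mathlib


/-- `Phik n k` is the number of subsets `A` of `{1,2,...,n}` of cardinality `k`
such that `gcd(A)` is relatively prime to `n`. -/
def Phik (n k : ℕ) : ℕ :=
  ((Finset.Icc 1 n).powerset.filter
    (fun A => A.card = k ∧ Nat.gcd (A.gcd id) n = 1)).card

open Finset ArithmeticFunction in
lemma sum_moebius_divisors (m : ℕ) :
    ∑ d ∈ m.divisors, (moebius d : ℤ) = if m = 1 then 1 else 0 := by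
  have h2 : (moebius * ↑zeta : ArithmeticFunction ℤ) m
      = (1 : ArithmeticFunction ℤ) m := by rw [moebius_mul_coe_zeta]
  rwa [coe_mul_zeta_apply, one_apply] at h2

open Finset ArithmeticFunction in
theorem Phik_eq_sum_moebius (n k : ℕ) (hn : 0 < n) (hk : 0 < k) :
    (Phik n k : ℤ) = ∑ d ∈ n.divisors,
      ArithmeticFunction.moebius d * ((n / d).choose k : ℤ) := by
  classical
  set S := (Finset.Icc 1 n).powerset.filter (fun A => A.card = k) with hS
  have key : ∀ d ∈ n.divisors,
      ((n / d).choose k : ℤ)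
        = ∑ A ∈ S, (if d ∣ A.gcd _root_.id then (1 : ℤ) else 0) := by
    intro d hd
    rw [Finset.sum_boole]
    have hTcard : ((Finset.Icc 1 n).filter (fun x => d ∣ x)).card = n / d := by
      have h : Finset.Icc 1 n = Finset.Ioc 0 n := rfl
      rw [h]
      exact Nat.Ioc_filter_dvd_card_eq_div n d
    have h2 : S.filter (fun A => d ∣ A.gcd _root_.id)
        = ((Finset.Icc 1 n).filter (fun x => d ∣ x)).powersetCard k := by
      ext A
      simp only [hS, Finset.mem_filter, Finset.mem_powerset, Finset.mem_powersetCard,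
        Finset.subset_iff, Finset.mem_filter, Finset.dvd_gcd_iff, _root_.id]
      constructor
      · rintro ⟨⟨hsub, hc⟩, hdvd⟩
        exact ⟨fun x hx => ⟨hsub hx, hdvd x hx⟩, hc⟩
      · rintro ⟨hsub, hc⟩
        exact ⟨⟨fun x hx => (hsub hx).1, hc⟩, fun x hx => (hsub hx).2⟩
    rw [h2, Finset.card_powersetCard, hTcard]
  rw [Finset.sum_congr rfl (fun d hd => by rw [key d hd])]
  simp_rw [Finset.mul_sum]
  rw [Finset.sum_comm]
  have inner : ∀ A ∈ S,
      (∑ d ∈ n.divisors, (moebius d : ℤ) * (if d ∣ A.gcd _root_.id then (1:ℤ) else 0))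
        = if Nat.gcd (A.gcd _root_.id) n = 1 then 1 else 0 := by
    intro A _
    rw [← sum_moebius_divisors (Nat.gcd (A.gcd _root_.id) n)]
    simp only [mul_ite, mul_one, mul_zero]
    rw [← Finset.sum_filter]
    apply Finset.sum_congr _ (fun _ _ => rfl)
    ext d
    simp only [Finset.mem_filter, Nat.mem_divisors, Nat.dvd_gcd_iff]
    constructor
    · rintro ⟨⟨h1, h2⟩, h3⟩; exact ⟨⟨h3, h1⟩, fun h => h2 (Nat.eq_zero_of_gcd_eq_zero_right h)⟩
    · rintro ⟨⟨h1, h2⟩, _⟩; exact ⟨⟨h2, hn.ne'⟩, h1⟩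
  rw [Finset.sum_congr rfl inner]
  rw [Finset.sum_boole, hS, Finset.filter_filter, Phik]
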